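/- For every strategy N ∈ 𝒩 there exists a strategy Ñ ∈ 𝒩 that realizes losses, in the sense that {S^j_i > S^j_t} ⊆ {Ñ_{i,t,j} = 0} a.s. for all i = 0,…,T−1, t = i+1,…,T, j = 1,…,d, with the property V^α(x,N) ≤ V^α(x,Ñ) almost surely for all initial capitals x ∈ ℝ. -/

import Mathlib

open MeasureTheory Filter Finset

noncomputable section
open scoped Classical

/-- Euclidean inner product on `Fin d → ℝ`. -/
def dotp {d : ℕ} (a b : Fin d → ℝ) : ℝ := ∑ j, a j * b j

/-- Euclidean norm on `Fin d → ℝ`. -/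
def eucNorm {d : ℕ} (a : Fin d → ℝ) : ℝ := Real.sqrt (∑ j, a j ^ 2)

/-- Accumulated realized gains and losses `G_t`, given the bank account history `eta`:
`G_t = ∑_{u=1}^t ( η_{u-1} r_u + ∑_{i=0}^{u-1} ⟨N_{i,u-1} - N_{i,u}, S_u - S_i⟩ )`. -/
def Gaux {d : ℕ} (S : ℕ → Fin d → ℝ) (r : ℕ → ℝ) (N : ℕ → ℕ → Fin d → ℝ)
    (eta : ℕ → ℝ) (t : ℕ) : ℝ :=
  ∑ u ∈ Finset.Icc 1 t,
    (eta (u - 1) * r u +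
      ∑ i ∈ Finset.range u, dotp (fun j => N i (u - 1) j - N i u j) (fun j => S u j - S i j))

/-- Limited-use-of-losses tax payments `Π_t = α · max_{0 ≤ u ≤ t} G_u`. -/
def Piaux {d : ℕ} (α : ℝ) (S : ℕ → Fin d → ℝ) (r : ℕ → ℝ) (N : ℕ → ℕ → Fin d → ℝ)
    (eta : ℕ → ℝ) (t : ℕ) : ℝ :=
  α * (Finset.range (t + 1)).sup' Finset.nonempty_range_add_one (fun u => Gaux S r N eta u)

/-- `etaHist α x S r N t` is the bank-account history after trading and taxes, up to time `t`:
for `s ≤ t` it gives `η_s`, and for `s > t` it gives `η_t`.  It is defined by the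
self-financing recursion `η_{-1} = x`,
`η_t - η_{t-1} = r_t η_{t-1} 1_{t ≥ 1} + ⟨∑_{i<t}(N_{i,t-1} - N_{i,t}) - N_{t,t}, S_t⟩
  - (Π_t - Π_{t-1}) 1_{t ≥ 1}`. -/
def etaHist {d : ℕ} (α x : ℝ) (S : ℕ → Fin d → ℝ) (r : ℕ → ℝ)
    (N : ℕ → ℕ → Fin d → ℝ) : ℕ → ℕ → ℝ :=
  Nat.rec (motive := fun _ => ℕ → ℝ)
    (fun _ => x - dotp (fun j => N 0 0 j) (fun j => S 0 j))
    (fun t e => fun s =>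
      if s ≤ t then e s
      else
        e t + r (t + 1) * e t
          + dotp
              (fun j => (∑ i ∈ Finset.range (t + 1), (N i t j - N i (t + 1) j))
                - N (t + 1) (t + 1) j)
              (fun j => S (t + 1) j)
          - (Piaux α S r N e (t + 1) - Piaux α S r N e t))

/-- A discrete-time market with horizon `T`, `d` risky assets, a filtration `F`,
adapted nonnegative-price processes are not required in general, and a nonnegative adapted
interest-rate process `r`. -/
structure Market (Ω : Type*) [m0 : MeasurableSpace Ω] (T d : ℕ) where
  P : Measure Ω
  hProb : IsProbabilityMeasure P
  F : ℕ → MeasurableSpace Ω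
  F_le : ∀ t, F t ≤ m0
  F_mono : Monotone F
  S : ℕ → Ω → Fin d → ℝ
  S_adapted : ∀ t, Measurable[F t] (S t)
  r : ℕ → Ω → ℝ
  r_nonneg : ∀ t ω, 0 ≤ r t ω
  r_adapted : ∀ t, Measurable[F t] (r t)

variable {Ω : Type*} [m0 : MeasurableSpace Ω] {T d : ℕ}

/-- A trading strategy: `N i t ω j` is the number of shares of asset `j` bought at time `i`
and still held after trading at time `t`.  It is `F t`-adapted, nonnegative, nonincreasing
in `t` (for `i ≤ t < T`), forced to liquidate at `T`, and zero before the purchase date. -/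
def Market.IsStrategy (M : Market Ω T d) (N : ℕ → ℕ → Ω → Fin d → ℝ) : Prop :=
  (∀ i t, Measurable[M.F t] (N i t)) ∧
  (∀ i t ω j, 0 ≤ N i t ω j) ∧
  (∀ i t, i ≤ t → t < T → ∀ ω j, N i (t + 1) ω j ≤ N i t ω j) ∧
  (∀ i ω j, N i T ω j = 0) ∧
  (∀ i t, t < i → ∀ ω j, N i t ω j = 0)

/-- After-tax terminal wealth `V^α(x,N) = η_T`. -/
def Market.V (M : Market Ω T d) (α x : ℝ) (N : ℕ → ℕ → Ω → Fin d → ℝ) (ω : Ω) : ℝ :=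
  etaHist α x (fun t => M.S t ω) (fun t => M.r t ω) (fun i t => N i t ω) T T

/-- The frictionless (tax-free) wealth process `V^0_t(x,N) = η_t + ⟨∑_{i≤t} N_{i,t}, S_t⟩`,
where `η` is the bank account for tax rate `0`. -/
def Market.V0proc (M : Market Ω T d) (x : ℝ) (N : ℕ → ℕ → Ω → Fin d → ℝ) (t : ℕ) (ω : Ω) : ℝ :=
  etaHist 0 x (fun u => M.S u ω) (fun u => M.r u ω) (fun i u => N i u ω) t t
    + dotp (fun j => ∑ i ∈ Finset.range (t + 1), N i t ω j) (fun j => M.S t ω j)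

/-- The no-arbitrage condition for tax rate `α`. -/
def Market.NA (M : Market Ω T d) (α : ℝ) : Prop :=
  ∀ N, M.IsStrategy N → (∀ᵐ ω ∂M.P, 0 ≤ M.V α 0 N ω) → ∀ᵐ ω ∂M.P, M.V α 0 N ω = 0

/-- The set `{V^α(x,N) : N ∈ 𝒩} - L^0(F_T; ℝ₊)` of attainable after-tax terminal wealths. -/
def Market.Vset (M : Market Ω T d) (α x : ℝ) : Set (Ω → ℝ) :=
  {f | ∃ N, M.IsStrategy N ∧
    ∃ g : Ω → ℝ, Measurable[M.F T] g ∧ (∀ ω, 0 ≤ g ω) ∧ f = fun ω => M.V α x N ω - g ω}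

/-- The frictionless wealth recursion
`V_t = (1+r_t) V_{t-1} + ⟨∑_{i<t} N_{i,t-1}, S_t - (1+r_t) S_{t-1}⟩`. -/
def wealth0 {d : ℕ} (S : ℕ → Fin d → ℝ) (r : ℕ → ℝ) (N : ℕ → ℕ → Fin d → ℝ) (x : ℝ) :
    ℕ → ℝ :=
  Nat.rec (motive := fun _ => ℝ) x (fun t W =>
    (1 + r (t + 1)) * W
      + dotp (fun j => ∑ i ∈ Finset.range (t + 1), N i t j)
          (fun j => S (t + 1) j - (1 + r (t + 1)) * S t j))

/-- Frictionless terminal wealth `V^0(x,N)`. -/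
def Market.V0 (M : Market Ω T d) (x : ℝ) (N : ℕ → ℕ → Ω → Fin d → ℝ) (ω : Ω) : ℝ :=
  wealth0 (fun t => M.S t ω) (fun t => M.r t ω) (fun i t => N i t ω) x T

/-- No-arbitrage for the frictionless model. -/
def Market.NA0 (M : Market Ω T d) : Prop :=
  ∀ N, M.IsStrategy N → (∀ᵐ ω ∂M.P, 0 ≤ M.V0 0 N ω) → ∀ᵐ ω ∂M.P, M.V0 0 N ω = 0

/-- The cone `ℛ_t` of reversible one-period strategies. -/
def Market.RevCone (M : Market Ω T d) (t : ℕ) : Set (Ω → Fin d → ℝ) :=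
  {β | Measurable[M.F t] β ∧ (∀ ω j, 0 ≤ β ω j) ∧
    ∀ᵐ ω ∂M.P, dotp (β ω) (fun j => M.S (t + 1) ω j - (1 + M.r (t + 1) ω) * M.S t ω j) = 0}

/-- `q` is the purely nonreversible part `q_t(β)` of `β`: it is `F_t`-measurable, nonnegative,
`β - q` is reversible, and `q` has minimal Euclidean norm among all such decompositions. -/
def Market.IsQ (M : Market Ω T d) (t : ℕ) (β q : Ω → Fin d → ℝ) : Prop :=
  Measurable[M.F t] q ∧ (∀ ω j, 0 ≤ q ω j) ∧
  (fun ω j => β ω j - q ω j) ∈ M.RevCone t ∧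
  ∀ q' : Ω → Fin d → ℝ, Measurable[M.F t] q' → (∀ ω j, 0 ≤ q' ω j) →
    (fun ω j => β ω j - q' ω j) ∈ M.RevCone t →
    ∀ᵐ ω ∂M.P, eucNorm (q ω) ≤ eucNorm (q' ω)

/-- `β` is purely nonreversible, i.e. `q_t(β) = β`. -/
def Market.PurelyNonRev (M : Market Ω T d) (t : ℕ) (β : Ω → Fin d → ℝ) : Prop :=
  M.IsQ t β β

/-- A reaction function: `R ω a i t` may depend on `ω` only through `F_t` and on the action
history `a` only through the actions up to time `t`; it is nonnegative, nonincreasing in `t`,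
vanishes at and after the horizon `T` and before the purchase date. -/
structure ReactionFun (M : Market Ω T d) where
  R : Ω → (ℕ → ℕ → Fin d → ℝ) → ℕ → ℕ → Fin d → ℝ
  nonneg : ∀ ω a i t j, 0 ≤ R ω a i t j
  adapted_actions : ∀ ω a a' i t, (∀ i' t', t' ≤ t → a i' t' = a' i' t') →
    R ω a i t = R ω a' i t
  meas : ∀ i t, Measurable[(M.F t).prod inferInstance]
    (fun p : Ω × (ℕ → ℕ → Fin d → ℝ) => R p.1 p.2 i t)
  antitone : ∀ ω a i t, i ≤ t → t + 2 ≤ T → ∀ j, R ω a i (t + 1) j ≤ R ω a i t j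
  upper : ∀ ω a i t, T ≤ t → ∀ j, R ω a i t j = 0
  lower : ∀ ω a i t, t < i → ∀ j, R ω a i t j = 0

/-- The strategy `R(N)` produced by a reaction function from a strategy `N`. -/
def ReactionFun.apply {M : Market Ω T d} (Rf : ReactionFun M)
    (N : ℕ → ℕ → Ω → Fin d → ℝ) : ℕ → ℕ → Ω → Fin d → ℝ :=
  fun i t ω => Rf.R ω (fun i' t' => N i' t' ω) i t

/-- `max_{i=0,…,T-1, j=1,…,d} N_{i,i,j}`. -/
def stratMax {Ω : Type*} {d : ℕ} (T : ℕ) (N : ℕ → ℕ → Ω → Fin d → ℝ) (ω : Ω) : ℝ :=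
  ⨆ i ∈ Finset.range T, ⨆ j : Fin d, N i i ω j

/-- A family of random variables is bounded in `L⁰` (bounded in probability). -/
def BoundedInL0 {Ω : Type*} [MeasurableSpace Ω] (P : Measure Ω) (𝒮 : Set (Ω → ℝ)) : Prop :=
  ∀ ε : ℝ, 0 < ε → ∃ C : ℝ, ∀ f ∈ 𝒮, P {ω | C < |f ω|} ≤ ENNReal.ofReal ε

/-- The "no unbounded non-substitutable investment with bounded risk" condition. -/
def Market.NUIBR (M : Market Ω T d) (α : ℝ) : Prop :=
  ∀ x : ℝ, ∃ Rf : ReactionFun M,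
    (∀ N, M.IsStrategy N → M.IsStrategy (Rf.apply N)) ∧
    (∀ N, M.IsStrategy N → ∀ᵐ ω ∂M.P, M.V α x N ω ≤ M.V α x (Rf.apply N) ω) ∧
    ∀ K : ℝ, 0 ≤ K →
      BoundedInL0 M.P (convexHull ℝ
        {f : Ω → ℝ | ∃ N, M.IsStrategy N ∧ (∀ᵐ ω ∂M.P, -K ≤ M.V α x N ω) ∧
          f = stratMax T (Rf.apply N)})

/-- A set of random variables is closed with respect to convergence in probability
(as a subset of `L⁰`, i.e. up to almost-sure equality). -/
def ClosedInProbability {Ω : Type*} [MeasurableSpace Ω] (P : Measure Ω)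
    (𝒮 : Set (Ω → ℝ)) : Prop :=
  ∀ (f : ℕ → Ω → ℝ) (g : Ω → ℝ), (∀ n, f n ∈ 𝒮) →
    TendstoInMeasure P f Filter.atTop g → ∃ g' ∈ 𝒮, g' =ᵐ[P] g


/-- Bank account process for an artificial linear tax rule `τ`:
taxes `Π^{(τ)}_t = α · G_{τ_t}` are paid according to the rule `τ` (with `τ 0 = 0`,
so that `Π^{(τ)}_0 = 0`).  `etaTau α x S r N τ t s` gives `η^{(τ)}_s` for `s ≤ t`. -/
def etaTau {d : ℕ} (α x : ℝ) (S : ℕ → Fin d → ℝ) (r : ℕ → ℝ)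
    (N : ℕ → ℕ → Fin d → ℝ) (τ : ℕ → ℕ) : ℕ → ℕ → ℝ :=
  Nat.rec (motive := fun _ => ℕ → ℝ)
    (fun _ => x - dotp (fun j => N 0 0 j) (fun j => S 0 j))
    (fun t e => fun s =>
      if s ≤ t then e s
      else
        e t + r (t + 1) * e t
          + dotp
              (fun j => (∑ i ∈ Finset.range (t + 1), (N i t j - N i (t + 1) j))
                - N (t + 1) (t + 1) j)
              (fun j => S (t + 1) j)
          - (α * Gaux S r N e (τ (t + 1)) - α * Gaux S r N e (τ t)))

variable {Ω : Type*} [m0 : MeasurableSpace Ω] {T d : ℕ}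

/-- An artificial linear tax rule: an adapted `{0,…,T}`-valued process `τ` with `τ_0 = 0`,
`τ` nondecreasing in `t`, `τ_t ≤ t`, and `τ_{τ_t} = τ_t` whenever `τ_t ≥ 1`. -/
def Market.IsTaxRule (M : Market Ω T d) (τ : ℕ → Ω → ℕ) : Prop :=
  (∀ ω, τ 0 ω = 0) ∧
  (∀ t, Measurable[M.F t] (τ t)) ∧
  (∀ t ω, τ t ω ≤ t) ∧
  (∀ t ω, τ t ω ≤ T) ∧
  (∀ s t, s ≤ t → ∀ ω, τ s ω ≤ τ t ω) ∧
  (∀ t ω, 1 ≤ τ t ω → τ (τ t ω) ω = τ t ω)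

/-- Terminal bank account `η^{(τ)}_T(N)` under the artificial tax rule `τ`. -/
def Market.etaTauT (M : Market Ω T d) (α x : ℝ) (N : ℕ → ℕ → Ω → Fin d → ℝ)
    (τ : ℕ → Ω → ℕ) (ω : Ω) : ℝ :=
  etaTau α x (fun t => M.S t ω) (fun t => M.r t ω) (fun i t => N i t ω) (fun t => τ t ω) T T

/-- A strategy realizes losses: it does not keep shares that trade below their purchase
price. -/
def Market.RealizesLosses (M : Market Ω T d) (N : ℕ → ℕ → Ω → Fin d → ℝ) : Prop :=
  ∀ i t j, i < t → t ≤ T → ∀ᵐ ω ∂M.P, M.S t ω j < M.S i ω j → N i t ω j = 0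

/-- The loss bound `L_t(N) = ((−x) ∨ 0 + ∑_{s<t} ⟨q_s(∑_{i≤s} N_{i,s}), S_s⟩)(1+r̄)^T`,
expressed through a given family `q s` of purely nonreversible parts. -/
def Lfun {Ω : Type*} {d : ℕ} (x rbar : ℝ) (T : ℕ) (S : ℕ → Ω → Fin d → ℝ)
    (q : ℕ → Ω → Fin d → ℝ) (t : ℕ) (ω : Ω) : ℝ :=
  (max (-x) 0 + ∑ s ∈ Finset.range t, dotp (q s ω) (fun j => S s ω j)) * (1 + rbar) ^ T

/-- A stopping time of the filtration `F`. -/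
def IsStoppingTimeFun {Ω : Type*} (F : ℕ → MeasurableSpace Ω) (τ : Ω → ℕ) : Prop :=
  ∀ t : ℕ, MeasurableSet[F t] {ω | τ ω ≤ t}

/-- The family of random variables over which the essential infimum defining `ε_t` is
taken. -/
def Market.epsFamily (M : Market Ω T d) (t : ℕ) : Set (Ω → ENNReal) :=
  {g | ∃ (ε : Ω → ℝ) (A : Set Ω) (N : ℕ → ℕ → Ω → Fin d → ℝ),
    Measurable[M.F t] ε ∧ (∀ ω, ε ω ∈ Set.Icc (0:ℝ) 1) ∧
    MeasurableSet[M.F t] A ∧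
    M.IsStrategy N ∧ (∀ i, i < t → ∀ ω j, N i i ω j = 0) ∧
    M.PurelyNonRev t (fun ω => N t t ω) ∧
    (∀ᵐ ω ∂M.P, eucNorm (N t t ω) = Set.indicator A (fun _ => (1:ℝ)) ω) ∧
    (∀ᵐ ω ∂M.P,
      (M.P[Set.indicator {ω' | M.V0 0 N ω' ≤ - ε ω'} (fun _ => (1:ℝ)) | M.F t]) ω ≤ ε ω) ∧
    g = fun ω => if ω ∈ A then ENNReal.ofReal (ε ω) else (⊤ : ENNReal)}

/-- `e` is the essential infimum of the family `𝒮` of `[0,∞]`-valued random variables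
(with respect to `P`, measurable with respect to `m'`). -/
def IsEssInfOfSet {Ω : Type*} [MeasurableSpace Ω] (m' : MeasurableSpace Ω) (P : Measure Ω)
    (𝒮 : Set (Ω → ENNReal)) (e : Ω → ENNReal) : Prop :=
  Measurable[m'] e ∧ (∀ g ∈ 𝒮, ∀ᵐ ω ∂P, e ω ≤ g ω) ∧
  ∀ e' : Ω → ENNReal, Measurable[m'] e' → (∀ g ∈ 𝒮, ∀ᵐ ω ∂P, e' ω ≤ g ω) →
    ∀ᵐ ω ∂P, e' ω ≤ e ω

/-- The positive part of an extended-real number, as an element of `[0,∞]`. -/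
def erealPos (y : EReal) : ENNReal := if y = ⊤ then ⊤ else ENNReal.ofReal y.toReal

/-- A utility function: `U = -∞` on the negative half-line, real-valued, nondecreasing and
concave on the positive half-line (with real restriction `u`), and continuous from the
right at `0`. -/
structure UtilityFun where
  U : ℝ → EReal
  u : ℝ → ℝ
  neg_bot : ∀ y : ℝ, y < 0 → U y = ⊥
  pos_real : ∀ y : ℝ, 0 < y → U y = (u y : EReal)
  mono : MonotoneOn u (Set.Ioi (0:ℝ))
  concave : ConcaveOn ℝ (Set.Ioi (0:ℝ)) u
  zero_lim : Filter.Tendsto U (nhdsWithin 0 (Set.Ioi (0:ℝ))) (nhds (U 0))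

/-- Expected utility `E[U(X)] = E[U⁺(X)] - E[U⁻(X)]`, with the convention that it equals
`-∞` whenever `E[U⁻(X)] = ∞`. -/
def expUtility {Ω : Type*} [MeasurableSpace Ω] (P : Measure Ω) (Uf : UtilityFun)
    (X : Ω → ℝ) : EReal :=
  if (∫⁻ ω, erealPos (-(Uf.U (X ω))) ∂P) = ⊤ then ⊥
  else ((∫⁻ ω, erealPos (Uf.U (X ω)) ∂P : ENNReal) : EReal)
    - ((∫⁻ ω, erealPos (-(Uf.U (X ω))) ∂P : ENNReal) : EReal)

/-- The value function `u^α(x) = sup_{N ∈ 𝒜^α(x)} E[U(V^α(x,N))]` of the utility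
maximization problem with taxes. -/
def Market.valueFn (M : Market Ω T d) (Uf : UtilityFun) (α x : ℝ) : EReal :=
  ⨆ N ∈ {N : ℕ → ℕ → Ω → Fin d → ℝ |
      M.IsStrategy N ∧ ∀ᵐ ω ∂M.P, 0 ≤ M.V α x N ω},
    expUtility M.P Uf (fun ω => M.V α x N ω)

/-- The value function `u^0(x)` of the frictionless utility maximization problem. -/
def Market.valueFn0 (M : Market Ω T d) (Uf : UtilityFun) (x : ℝ) : EReal :=
  ⨆ N ∈ {N : ℕ → ℕ → Ω → Fin d → ℝ |
      M.IsStrategy N ∧ ∀ᵐ ω ∂M.P, 0 ≤ M.V0 x N ω},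
    expUtility M.P Uf (fun ω => M.V0 x N ω)

/-- The set `{V^α(x,N) : N ∈ 𝒜^α(x)} - L^0(F_T; ℝ₊)`. -/
def Market.VsetNonneg (M : Market Ω T d) (α x : ℝ) : Set (Ω → ℝ) :=
  {f | ∃ N, M.IsStrategy N ∧ (∀ᵐ ω ∂M.P, 0 ≤ M.V α x N ω) ∧
    ∃ g : Ω → ℝ, Measurable[M.F T] g ∧ (∀ ω, 0 ≤ g ω) ∧ f = fun ω => M.V α x N ω - g ω}

/-- The set `{V^0(x,N) : N ∈ 𝒩} - L^0(F_T; ℝ₊)` for the frictionless model. -/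
def Market.V0set (M : Market Ω T d) (x : ℝ) : Set (Ω → ℝ) :=
  {f | ∃ N, M.IsStrategy N ∧
    ∃ g : Ω → ℝ, Measurable[M.F T] g ∧ (∀ ω, 0 ≤ g ω) ∧ f = fun ω => M.V0 x N ω - g ω}

/-- A measurable (set-valued) random set: preimages of open sets are measurable. -/
def MeasRandomSet {Ω : Type*} (m : MeasurableSpace Ω) {d : ℕ}
    (K : Ω → Set (Fin d → ℝ)) : Prop :=
  ∀ O : Set (Fin d → ℝ), IsOpen O → MeasurableSet[m] {ω | (K ω ∩ O).Nonempty}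

/-- The random set `A_t = {β ∈ 𝒫_t : 1 + r_{t+1} + ⟨β, S_{t+1} - (1+r_{t+1})S_t⟩ ≥ 0 a.s.}`. -/
def Market.AtSet (M : Market Ω T d) (t : ℕ) : Set (Ω → Fin d → ℝ) :=
  {β | M.PurelyNonRev t β ∧
    ∀ᵐ ω ∂M.P, 0 ≤ 1 + M.r (t + 1) ω
      + dotp (β ω) (fun j => M.S (t + 1) ω j - (1 + M.r (t + 1) ω) * M.S t ω j)}


section Statement11Aux

open Finset

variable {d : ℕ}

/-- The time at which the current (reduced) basis of a share bought at time `i` was set: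
resets to `t+1` whenever the price drops strictly below the current basis. -/
def mfun (p : ℕ → ℝ) (i t : ℕ) : ℕ :=
  Nat.rec (motive := fun _ => ℕ) i
    (fun t' m => if t' + 1 ≤ i then i else if p (t' + 1) < p m then t' + 1 else m) t

lemma mfun_zero (p : ℕ → ℝ) (i : ℕ) : mfun p i 0 = i := rfl

lemma mfun_succ (p : ℕ → ℝ) (i t : ℕ) :
    mfun p i (t + 1) =
      if t + 1 ≤ i then i else if p (t + 1) < p (mfun p i t) then t + 1 else mfun p i t := rfl

lemma mfun_of_le (p : ℕ → ℝ) {i t : ℕ} (h : t ≤ i) : mfun p i t = i := by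
  induction t with
  | zero => rfl
  | succ t ih => rw [mfun_succ, if_pos h]

lemma mfun_le (p : ℕ → ℝ) (i t : ℕ) : mfun p i t ≤ max i t := by
  induction t with
  | zero => simp [mfun_zero]
  | succ t ih =>
    rw [mfun_succ]
    split_ifs with h1 h2 <;> omega

lemma mfun_price_le (p : ℕ → ℝ) (i t : ℕ) : p (mfun p i t) ≤ p i := by
  induction t with
  | zero => simp [mfun_zero]
  | succ t ih =>
    rw [mfun_succ]
    split_ifs with h1 h2
    · exact le_rfl
    · exact le_trans h2.le ih
    · exact ih

lemma mfun_succ_eq_of_le (p : ℕ → ℝ) {i t k : ℕ} (h : mfun p i (t + 1) = k) (hk : k ≤ t) :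
    mfun p i t = k := by
  rw [mfun_succ] at h
  split_ifs at h with h1 h2
  · subst h; exact mfun_of_le p (by omega)
  · omega
  · exact h

lemma mfun_not_lt (p : ℕ → ℝ) {i t k : ℕ} (h : mfun p i t = k) (hk : k < t) :
    ¬ p t < p k := by
  cases t with
  | zero => omega
  | succ t' =>
    rw [mfun_succ] at h
    split_ifs at h with h1 h2
    · omega
    · omega
    · rw [h] at h2; exact h2

end Statement11Aux


section Statement11Core

open Finset

variable {d : ℕ}

/-- `η_t` along a fixed path. -/
def etaP (α x : ℝ) (S : ℕ → Fin d → ℝ) (r : ℕ → ℝ) (N : ℕ → ℕ → Fin d → ℝ) (t : ℕ) : ℝ :=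
  etaHist α x S r N t t

/-- `G_t` along a fixed path. -/
def GP (α x : ℝ) (S : ℕ → Fin d → ℝ) (r : ℕ → ℝ) (N : ℕ → ℕ → Fin d → ℝ) (t : ℕ) : ℝ :=
  Gaux S r N (etaP α x S r N) t

/-- `max_{u ≤ t} G_u` along a fixed path. -/
def MPx (α x : ℝ) (S : ℕ → Fin d → ℝ) (r : ℕ → ℝ) (N : ℕ → ℕ → Fin d → ℝ) (t : ℕ) : ℝ :=
  (Finset.range (t + 1)).sup' Finset.nonempty_range_add_one (GP α x S r N)

lemma etaHist_succ_apply (α x : ℝ) (S : ℕ → Fin d → ℝ) (r : ℕ → ℝ)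
    (N : ℕ → ℕ → Fin d → ℝ) (t s : ℕ) :
    etaHist α x S r N (t + 1) s =
      if s ≤ t then etaHist α x S r N t s
      else
        etaHist α x S r N t t + r (t + 1) * etaHist α x S r N t t
          + dotp
              (fun j => (∑ i ∈ Finset.range (t + 1), (N i t j - N i (t + 1) j))
                - N (t + 1) (t + 1) j)
              (fun j => S (t + 1) j)
          - (Piaux α S r N (etaHist α x S r N t) (t + 1)
              - Piaux α S r N (etaHist α x S r N t) t) := rfl

lemma etaHist_stable (α x : ℝ) (S : ℕ → Fin d → ℝ) (r : ℕ → ℝ)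
    (N : ℕ → ℕ → Fin d → ℝ) : ∀ t s, s ≤ t → etaHist α x S r N t s = etaP α x S r N s := by
  intro t
  induction t with
  | zero => intro s hs; interval_cases s; rfl
  | succ t ih =>
    intro s hs
    by_cases h : s ≤ t
    · rw [etaHist_succ_apply, if_pos h]; exact ih s h
    · have : s = t + 1 := by omega
      subst this; rfl

lemma Gaux_congr (S : ℕ → Fin d → ℝ) (r : ℕ → ℝ) (N : ℕ → ℕ → Fin d → ℝ)
    (e e' : ℕ → ℝ) (t : ℕ) (h : ∀ v, v < t → e v = e' v) :
    Gaux S r N e t = Gaux S r N e' t := by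
  unfold Gaux
  refine Finset.sum_congr rfl fun u hu => ?_
  simp only [Finset.mem_Icc] at hu
  rw [h (u - 1) (by omega)]

lemma Piaux_etaHist (α x : ℝ) (S : ℕ → Fin d → ℝ) (r : ℕ → ℝ)
    (N : ℕ → ℕ → Fin d → ℝ) (t u : ℕ) (hu : u ≤ t + 1) :
    Piaux α S r N (etaHist α x S r N t) u = α * MPx α x S r N u := by
  unfold Piaux MPx
  congr 1
  refine Finset.sup'_congr _ rfl fun v hv => ?_
  simp only [Finset.mem_range] at hv
  refine Gaux_congr S r N _ _ v fun w hw => ?_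
  exact etaHist_stable α x S r N t w (by omega)

lemma etaP_succ (α x : ℝ) (S : ℕ → Fin d → ℝ) (r : ℕ → ℝ)
    (N : ℕ → ℕ → Fin d → ℝ) (t : ℕ) :
    etaP α x S r N (t + 1) =
      etaP α x S r N t + r (t + 1) * etaP α x S r N t
        + dotp
            (fun j => (∑ i ∈ Finset.range (t + 1), (N i t j - N i (t + 1) j))
              - N (t + 1) (t + 1) j)
            (fun j => S (t + 1) j)
        - (α * MPx α x S r N (t + 1) - α * MPx α x S r N t) := by
  show etaHist α x S r N (t+1) (t+1) = _
  rw [etaHist_succ_apply, if_neg (by omega),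
    Piaux_etaHist α x S r N t (t + 1) le_rfl,
    Piaux_etaHist α x S r N t t (by omega)]
  rfl

lemma GP_zero (α x : ℝ) (S : ℕ → Fin d → ℝ) (r : ℕ → ℝ) (N : ℕ → ℕ → Fin d → ℝ) :
    GP α x S r N 0 = 0 := by
  unfold GP Gaux; simp

lemma MPx_zero (α x : ℝ) (S : ℕ → Fin d → ℝ) (r : ℕ → ℝ) (N : ℕ → ℕ → Fin d → ℝ) :
    MPx α x S r N 0 = 0 := by
  unfold MPx
  apply le_antisymm
  · refine Finset.sup'_le _ _ fun v hv => ?_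
    simp only [Finset.mem_range] at hv
    interval_cases v
    exact le_of_eq (GP_zero α x S r N)
  · have h := Finset.le_sup' (f := GP α x S r N) (Finset.self_mem_range_succ 0)
    rwa [GP_zero] at h

/-- scalar bookkeeping: realized + unrealized gains = mark-to-market gains. -/
lemma scalar_mtm (p : ℕ → ℝ) (ν : ℕ → ℕ → ℝ) (u : ℕ) :
    (∑ v ∈ Finset.Icc 1 u, ∑ i ∈ Finset.range v, (ν i (v - 1) - ν i v) * (p v - p i))
      + ∑ i ∈ Finset.range (u + 1), ν i u * (p u - p i)
    = ∑ v ∈ Finset.Icc 1 u, (∑ i ∈ Finset.range v, ν i (v - 1)) * (p v - p (v - 1)) := by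
  induction u with
  | zero => simp
  | succ u ih =>
    rw [Finset.sum_Icc_succ_top (by omega : 1 ≤ u + 1),
        Finset.sum_Icc_succ_top (by omega : 1 ≤ u + 1)]
    simp only [Nat.add_sub_cancel]
    have expand : ∑ i ∈ Finset.range (u + 2), ν i (u + 1) * (p (u + 1) - p i)
        = ∑ i ∈ Finset.range (u + 1), ν i (u + 1) * (p (u + 1) - p i) := by
      rw [Finset.sum_range_succ]; simp
    rw [expand]
    have h1 : (∑ i ∈ Finset.range (u + 1), (ν i u - ν i (u + 1)) * (p (u + 1) - p i))
        + ∑ i ∈ Finset.range (u + 1), ν i (u + 1) * (p (u + 1) - p i)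
        = ∑ i ∈ Finset.range (u + 1), ν i u * (p (u + 1) - p i) := by
      rw [← Finset.sum_add_distrib]
      exact Finset.sum_congr rfl fun i _ => by ring
    have h2 : (∑ i ∈ Finset.range (u + 1), ν i u * (p u - p i))
        + (∑ i ∈ Finset.range (u + 1), ν i u) * (p (u + 1) - p u)
        = ∑ i ∈ Finset.range (u + 1), ν i u * (p (u + 1) - p i) := by
      rw [Finset.sum_mul, ← Finset.sum_add_distrib]
      exact Finset.sum_congr rfl fun i _ => by ring
    linarith

end Statement11Core


section Statement11Main

open Finset

variable {d : ℕ}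

/-- Interest-income part of `G_t`. -/
def RIP (α x : ℝ) (S : ℕ → Fin d → ℝ) (r : ℕ → ℝ) (N : ℕ → ℕ → Fin d → ℝ) (t : ℕ) : ℝ :=
  ∑ u ∈ Finset.Icc 1 t, etaP α x S r N (u - 1) * r u

/-- Cumulative realized gains. -/
def DeltaP (S : ℕ → Fin d → ℝ) (N : ℕ → ℕ → Fin d → ℝ) (t : ℕ) : ℝ :=
  ∑ u ∈ Finset.Icc 1 t, ∑ i ∈ Finset.range u,
    dotp (fun j => N i (u - 1) j - N i u j) (fun j => S u j - S i j)

/-- Unrealized gains at time `t`. -/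
def UPx (S : ℕ → Fin d → ℝ) (N : ℕ → ℕ → Fin d → ℝ) (t : ℕ) : ℝ :=
  ∑ i ∈ Finset.range (t + 1), dotp (fun j => N i t j) (fun j => S t j - S i j)

/-- Mark-to-market gains at time `t`. -/
def MtMP (S : ℕ → Fin d → ℝ) (N : ℕ → ℕ → Fin d → ℝ) (t : ℕ) : ℝ :=
  ∑ u ∈ Finset.Icc 1 t,
    dotp (fun j => ∑ i ∈ Finset.range u, N i (u - 1) j) (fun j => S u j - S (u - 1) j)

lemma GP_eq (α x : ℝ) (S : ℕ → Fin d → ℝ) (r : ℕ → ℝ) (N : ℕ → ℕ → Fin d → ℝ) (t : ℕ) :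
    GP α x S r N t = RIP α x S r N t + DeltaP S N t := by
  unfold GP Gaux RIP DeltaP
  rw [← Finset.sum_add_distrib]

lemma DeltaP_add_UPx (S : ℕ → Fin d → ℝ) (N : ℕ → ℕ → Fin d → ℝ) (t : ℕ) :
    DeltaP S N t + UPx S N t = MtMP S N t := by
  unfold DeltaP UPx MtMP dotp
  have e1 : (∑ u ∈ Finset.Icc 1 t, ∑ i ∈ Finset.range u,
        ∑ j : Fin d, (N i (u - 1) j - N i u j) * (S u j - S i j))
      = ∑ j : Fin d, ∑ u ∈ Finset.Icc 1 t, ∑ i ∈ Finset.range u,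
        (N i (u - 1) j - N i u j) * (S u j - S i j) := by
    rw [Finset.sum_comm]
    exact Finset.sum_congr rfl fun u _ => Finset.sum_comm
  have e2 : (∑ i ∈ Finset.range (t + 1), ∑ j : Fin d, N i t j * (S t j - S i j))
      = ∑ j : Fin d, ∑ i ∈ Finset.range (t + 1), N i t j * (S t j - S i j) :=
    Finset.sum_comm
  have e3 : (∑ u ∈ Finset.Icc 1 t,
        ∑ j : Fin d, (∑ i ∈ Finset.range u, N i (u - 1) j) * (S u j - S (u - 1) j))
      = ∑ j : Fin d, ∑ u ∈ Finset.Icc 1 t,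
        (∑ i ∈ Finset.range u, N i (u - 1) j) * (S u j - S (u - 1) j) :=
    Finset.sum_comm
  rw [e1, e2, e3, ← Finset.sum_add_distrib]
  exact Finset.sum_congr rfl fun j _ =>
    scalar_mtm (fun u => S u j) (fun i u => N i u j) t

lemma MtMP_congr (S : ℕ → Fin d → ℝ) (N Nt : ℕ → ℕ → Fin d → ℝ)
    (h : ∀ u j, (∑ i ∈ Finset.range (u + 1), Nt i u j) = ∑ i ∈ Finset.range (u + 1), N i u j)
    (t : ℕ) : MtMP S Nt t = MtMP S N t := by
  unfold MtMP
  refine Finset.sum_congr rfl fun u hu => ?_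
  simp only [Finset.mem_Icc] at hu
  obtain ⟨v, rfl⟩ : ∃ v, u = v + 1 := ⟨u - 1, by omega⟩
  simp only [Nat.add_sub_cancel]
  unfold dotp
  refine Finset.sum_congr rfl fun j _ => ?_
  show (∑ i ∈ Finset.range (v + 1), Nt i v j) * (S (v + 1) j - S v j)
      = (∑ i ∈ Finset.range (v + 1), N i v j) * (S (v + 1) j - S v j)
  rw [h v j]

/-- `D_t = η̃_t - η_t`. -/
def DPx (α x : ℝ) (S : ℕ → Fin d → ℝ) (r : ℕ → ℝ) (N Nt : ℕ → ℕ → Fin d → ℝ) (u : ℕ) : ℝ :=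
  etaP α x S r Nt u - etaP α x S r N u

/-- `I_t = ∑_{v ≤ t} r_v D_{v-1}`. -/
def IPx (α x : ℝ) (S : ℕ → Fin d → ℝ) (r : ℕ → ℝ) (N Nt : ℕ → ℕ → Fin d → ℝ) (t : ℕ) : ℝ :=
  ∑ v ∈ Finset.Ioc 0 t, r v * DPx α x S r N Nt (v - 1)

/-- THE key deterministic comparison: if `Ñ` has the same aggregate position as `N` and
at least the unrealized gains of `N` at all times, then `η̃_t ≥ η_t` for all `t`. -/
lemma etaP_le (α x : ℝ) (hα0 : 0 ≤ α) (hα1 : α ≤ 1) (S : ℕ → Fin d → ℝ) (r : ℕ → ℝ)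
    (hr : ∀ u, 0 ≤ r u) (N Nt : ℕ → ℕ → Fin d → ℝ)
    (hagg : ∀ u j, (∑ i ∈ Finset.range (u + 1), Nt i u j) = ∑ i ∈ Finset.range (u + 1), N i u j)
    (hU : ∀ u, UPx S N u ≤ UPx S Nt u) :
    ∀ t, (∀ u, u ≤ t → 0 ≤ DPx α x S r N Nt u) ∧
      α * (MPx α x S r N t + IPx α x S r N Nt t - MPx α x S r Nt t)
        ≤ DPx α x S r N Nt t := by
  -- G̃ decomposition
  have hG : ∀ u, GP α x S r Nt u
      = GP α x S r N u + IPx α x S r N Nt u + (UPx S N u - UPx S Nt u) := by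
    intro u
    have d1 := DeltaP_add_UPx S N u
    have d2 := DeltaP_add_UPx S Nt u
    have d3 := MtMP_congr S N Nt hagg u
    have g1 := GP_eq α x S r N u
    have g2 := GP_eq α x S r Nt u
    have ri : RIP α x S r Nt u - RIP α x S r N u = IPx α x S r N Nt u := by
      unfold RIP IPx DPx
      rw [← Finset.Icc_add_one_left_eq_Ioc, ← Finset.sum_sub_distrib]
      exact Finset.sum_congr rfl fun v _ => by ring
    linarith
  -- D at 0
  have hD0 : DPx α x S r N Nt 0 = 0 := by
    unfold DPx etaP
    show (x - dotp (fun j => Nt 0 0 j) fun j => S 0 j)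
        - (x - dotp (fun j => N 0 0 j) fun j => S 0 j) = 0
    have : (dotp (fun j => Nt 0 0 j) fun j => S 0 j)
        = dotp (fun j => N 0 0 j) fun j => S 0 j := by
      unfold dotp
      refine Finset.sum_congr rfl fun j _ => ?_
      have h0 := hagg 0 j
      simp only [zero_add, Finset.sum_range_one] at h0
      show Nt 0 0 j * S 0 j = N 0 0 j * S 0 j
      rw [h0]
    rw [this]; ring
  intro t
  induction t with
  | zero =>
    constructor
    · intro u hu; interval_cases u; rw [hD0]
    · rw [hD0, MPx_zero, MPx_zero]
      have : IPx α x S r N Nt 0 = 0 := by unfold IPx; simp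
      rw [this]; simp
  | succ t ih =>
    obtain ⟨ihD, ihK⟩ := ih
    -- monotonicity of I
    have hImono : ∀ u, u ≤ t + 1 → IPx α x S r N Nt u ≤ IPx α x S r N Nt (t + 1) := by
      intro u hu
      unfold IPx
      rw [← Finset.sum_Ioc_consecutive _ (Nat.zero_le u) hu]
      have : 0 ≤ ∑ v ∈ Finset.Ioc u (t + 1), r v * DPx α x S r N Nt (v - 1) := by
        refine Finset.sum_nonneg fun v hv => ?_
        simp only [Finset.mem_Ioc] at hv
        refine mul_nonneg (hr v) ?_
        exact ihD (v - 1) (by omega)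
      linarith
    -- K at t+1 is nonnegative
    have hK1 : 0 ≤ MPx α x S r N (t + 1) + IPx α x S r N Nt (t + 1) - MPx α x S r Nt (t + 1) := by
      have : MPx α x S r Nt (t + 1)
          ≤ MPx α x S r N (t + 1) + IPx α x S r N Nt (t + 1) := by
        unfold MPx
        refine Finset.sup'_le _ _ fun u hu => ?_
        simp only [Finset.mem_range] at hu
        have h1 := hG u
        have h2 := hU u
        have h3 := hImono u (by omega)
        have h4 : GP α x S r N u ≤ (Finset.range (t + 2)).sup'
            Finset.nonempty_range_add_one (GP α x S r N) :=
          Finset.le_sup' _ (by simp only [Finset.mem_range]; omega)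
        show GP α x S r Nt u ≤ _
        calc GP α x S r Nt u
            = GP α x S r N u + IPx α x S r N Nt u + (UPx S N u - UPx S Nt u) := h1
          _ ≤ (Finset.range (t + 2)).sup' Finset.nonempty_range_add_one (GP α x S r N)
              + IPx α x S r N Nt (t + 1) := by linarith
      linarith
    -- similarly K at t
    have hK0 : 0 ≤ MPx α x S r N t + IPx α x S r N Nt t - MPx α x S r Nt t := by
      have : MPx α x S r Nt t ≤ MPx α x S r N t + IPx α x S r N Nt t := by
        unfold MPx
        refine Finset.sup'_le _ _ fun u hu => ?_
        simp only [Finset.mem_range] at hu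
        have h1 := hG u
        have h2 := hU u
        have h3 : IPx α x S r N Nt u ≤ IPx α x S r N Nt t := by
          unfold IPx
          rw [← Finset.sum_Ioc_consecutive _ (Nat.zero_le u) (by omega : u ≤ t)]
          have : 0 ≤ ∑ v ∈ Finset.Ioc u t, r v * DPx α x S r N Nt (v - 1) := by
            refine Finset.sum_nonneg fun v hv => ?_
            simp only [Finset.mem_Ioc] at hv
            exact mul_nonneg (hr v) (ihD (v - 1) (by omega))
          linarith
        have h4 : GP α x S r N u ≤ (Finset.range (t + 1)).sup'
            Finset.nonempty_range_add_one (GP α x S r N) :=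
          Finset.le_sup' _ (by simp only [Finset.mem_range]; omega)
        show GP α x S r Nt u ≤ _
        linarith
      linarith
    -- the cashflow terms agree
    have hdot : dotp
          (fun j => (∑ i ∈ Finset.range (t + 1), (Nt i t j - Nt i (t + 1) j))
            - Nt (t + 1) (t + 1) j) (fun j => S (t + 1) j)
        = dotp
          (fun j => (∑ i ∈ Finset.range (t + 1), (N i t j - N i (t + 1) j))
            - N (t + 1) (t + 1) j) (fun j => S (t + 1) j) := by
      unfold dotp
      refine Finset.sum_congr rfl fun j _ => ?_
      have h1 := hagg t j
      have h2 := hagg (t + 1) j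
      rw [Finset.sum_range_succ, Finset.sum_range_succ (fun i => N i (t + 1) j)] at h2
      show ((∑ i ∈ Finset.range (t + 1), (Nt i t j - Nt i (t + 1) j))
            - Nt (t + 1) (t + 1) j) * S (t + 1) j
          = ((∑ i ∈ Finset.range (t + 1), (N i t j - N i (t + 1) j))
            - N (t + 1) (t + 1) j) * S (t + 1) j
      rw [Finset.sum_sub_distrib, Finset.sum_sub_distrib]
      have : (∑ i ∈ Finset.range (t + 1), Nt i t j)
            - (∑ i ∈ Finset.range (t + 1), Nt i (t + 1) j) - Nt (t + 1) (t + 1) j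
          = (∑ i ∈ Finset.range (t + 1), N i t j)
            - (∑ i ∈ Finset.range (t + 1), N i (t + 1) j) - N (t + 1) (t + 1) j := by
        linarith
      rw [this]
    -- recursion for D
    have hrecN := etaP_succ α x S r N t
    have hrecNt := etaP_succ α x S r Nt t
    have hDrec : DPx α x S r N Nt (t + 1)
        = DPx α x S r N Nt t + r (t + 1) * DPx α x S r N Nt t
          - α * (MPx α x S r Nt (t + 1) - MPx α x S r Nt t)
          + α * (MPx α x S r N (t + 1) - MPx α x S r N t) := by
      unfold DPx
      rw [hrecN, hrecNt, hdot]
      ring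
    have hIrec : IPx α x S r N Nt (t + 1)
        = IPx α x S r N Nt t + r (t + 1) * DPx α x S r N Nt t := by
      unfold IPx
      rw [Finset.sum_Ioc_succ_top (Nat.zero_le t)]
      simp only [Nat.add_sub_cancel]
    have hDt : 0 ≤ DPx α x S r N Nt t := ihD t le_rfl
    have hprod : 0 ≤ (1 - α) * (r (t + 1) * DPx α x S r N Nt t) :=
      mul_nonneg (by linarith) (mul_nonneg (hr (t + 1)) hDt)
    have hmain : α * (MPx α x S r N (t + 1) + IPx α x S r N Nt (t + 1)
          - MPx α x S r Nt (t + 1)) ≤ DPx α x S r N Nt (t + 1) := by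
      nlinarith [ihK, hK0, hDrec, hIrec, hprod]
    refine ⟨fun u hu => ?_, hmain⟩
    by_cases h : u ≤ t
    · exact ihD u h
    · have : u = t + 1 := by omega
      subst this
      have := mul_nonneg hα0 hK1
      linarith

end Statement11Main


section Statement11Construct

open Finset

variable {Ω : Type*} [m0 : MeasurableSpace Ω] {T d : ℕ}

/-- The loss-realizing modification of `N`: shares are assigned to the lot of their
last basis-reset time. -/
def NtilDef (M : Market Ω T d) (N : ℕ → ℕ → Ω → Fin d → ℝ) (k t : ℕ) (ω : Ω)
    (j : Fin d) : ℝ :=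
  ∑ i ∈ Finset.range (t + 1),
    if mfun (fun u => M.S u ω j) i t = k then N i t ω j else 0

lemma mfun_measurable (M : Market Ω T d) (j : Fin d) (i : ℕ) :
    ∀ t, Measurable[M.F t] (fun ω => mfun (fun u => M.S u ω j) i t) := by
  intro t
  induction t with
  | zero =>
    simp only [mfun_zero]
    exact measurable_const
  | succ t ih =>
    by_cases hi : t + 1 ≤ i
    · have hfun : (fun ω => mfun (fun u => M.S u ω j) i (t + 1)) = fun _ => i :=
        funext fun ω => mfun_of_le _ hi
      rw [hfun]; exact measurable_const
    · have hit : i ≤ t := by omega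
      have hfun : (fun ω => mfun (fun u => M.S u ω j) i (t + 1))
          = fun ω => if M.S (t + 1) ω j < M.S (mfun (fun u => M.S u ω j) i t) ω j
              then t + 1 else mfun (fun u => M.S u ω j) i t :=
        funext fun ω => by rw [mfun_succ, if_neg hi]
      rw [hfun]
      have hm' : Measurable[M.F (t + 1)] (fun ω => mfun (fun u => M.S u ω j) i t) :=
        ih.mono (M.F_mono (Nat.le_succ t)) le_rfl
      have hmle : ∀ ω, mfun (fun u => M.S u ω j) i t ≤ t := fun ω => by
        have h1 := mfun_le (fun u => M.S u ω j) i t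
        have h2 : max i t = t := max_eq_right hit
        omega
      have hSm : Measurable[M.F (t + 1)]
          (fun ω => M.S (mfun (fun u => M.S u ω j) i t) ω j) := by
        have hrw : (fun ω => M.S (mfun (fun u => M.S u ω j) i t) ω j)
            = fun ω => ∑ k ∈ Finset.range (t + 1),
                if mfun (fun u => M.S u ω j) i t = k then M.S k ω j else 0 := by
          funext ω
          rw [Finset.sum_ite_eq (Finset.range (t + 1))
            (mfun (fun u => M.S u ω j) i t) (fun k => M.S k ω j)]
          rw [if_pos (Finset.mem_range.mpr (by have := hmle ω; omega))]
        rw [hrw]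
        refine Finset.measurable_sum _ fun k hk => ?_
        simp only [Finset.mem_range] at hk
        refine Measurable.ite (hm' (measurableSet_singleton k)) ?_ measurable_const
        exact ((measurable_pi_apply j).comp (M.S_adapted k)).mono
          (M.F_mono (by omega)) le_rfl
      have hS1 : Measurable[M.F (t + 1)] (fun ω => M.S (t + 1) ω j) :=
        (measurable_pi_apply j).comp (M.S_adapted (t + 1))
      exact Measurable.ite (measurableSet_lt hS1 hSm) measurable_const hm'

lemma Ntil_agg (M : Market Ω T d) (N : ℕ → ℕ → Ω → Fin d → ℝ) (ω : Ω) (u : ℕ) (j : Fin d) :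
    (∑ k ∈ Finset.range (u + 1), NtilDef M N k u ω j)
      = ∑ i ∈ Finset.range (u + 1), N i u ω j := by
  unfold NtilDef
  rw [Finset.sum_comm]
  refine Finset.sum_congr rfl fun i hi => ?_
  simp only [Finset.mem_range] at hi
  rw [Finset.sum_ite_eq (Finset.range (u + 1)) (mfun (fun v => M.S v ω j) i u)
    (fun _ => N i u ω j)]
  rw [if_pos]
  refine Finset.mem_range.mpr ?_
  have h1 := mfun_le (fun v => M.S v ω j) i u
  have h2 : max i u = u := max_eq_right (by omega)
  omega

lemma Ntil_UPx (M : Market Ω T d) (N : ℕ → ℕ → Ω → Fin d → ℝ)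
    (hpos : ∀ i t ω j, 0 ≤ N i t ω j) (ω : Ω) (u : ℕ) :
    UPx (fun t => M.S t ω) (fun i t => N i t ω) u
      ≤ UPx (fun t => M.S t ω) (fun i t => NtilDef M N i t ω) u := by
  simp only [UPx, dotp, NtilDef]
  have hR : (∑ k ∈ Finset.range (u + 1), ∑ j : Fin d,
        (∑ i ∈ Finset.range (u + 1),
          if mfun (fun v => M.S v ω j) i u = k then N i u ω j else 0)
          * (M.S u ω j - M.S k ω j))
      = ∑ j : Fin d, ∑ i ∈ Finset.range (u + 1),
          N i u ω j * (M.S u ω j - M.S (mfun (fun v => M.S v ω j) i u) ω j) := by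
    rw [Finset.sum_comm]
    refine Finset.sum_congr rfl fun j _ => ?_
    have step1 : ∀ k ∈ Finset.range (u + 1),
        (∑ i ∈ Finset.range (u + 1),
          if mfun (fun v => M.S v ω j) i u = k then N i u ω j else 0)
          * (M.S u ω j - M.S k ω j)
        = ∑ i ∈ Finset.range (u + 1),
            if mfun (fun v => M.S v ω j) i u = k
              then N i u ω j * (M.S u ω j - M.S k ω j) else 0 := by
      intro k _
      rw [Finset.sum_mul]
      exact Finset.sum_congr rfl fun i _ => by rw [ite_mul, zero_mul]
    rw [Finset.sum_congr rfl step1, Finset.sum_comm]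
    refine Finset.sum_congr rfl fun i hi => ?_
    simp only [Finset.mem_range] at hi
    rw [Finset.sum_ite_eq (Finset.range (u + 1)) (mfun (fun v => M.S v ω j) i u)
      (fun k => N i u ω j * (M.S u ω j - M.S k ω j))]
    rw [if_pos]
    refine Finset.mem_range.mpr ?_
    have h1 := mfun_le (fun v => M.S v ω j) i u
    have h2 : max i u = u := max_eq_right (by omega)
    omega
  rw [hR, Finset.sum_comm]
  refine Finset.sum_le_sum fun j _ => Finset.sum_le_sum fun i _ => ?_
  refine mul_le_mul_of_nonneg_left ?_ (hpos i u ω j)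
  have := mfun_price_le (fun v => M.S v ω j) i u
  exact sub_le_sub_left this _

end Statement11Construct

/-- For every strategy `N` there is a strategy `Ñ` that realizes losses
(holds no shares trading below their purchase price) and is at least as good:
`V^α(x,N) ≤ V^α(x,Ñ)` a.s. for every initial capital `x`. -/
theorem exists_realizesLosses_dominating
    (M : Market Ω T d) (α : ℝ) (hα0 : 0 ≤ α) (hα1 : α < 1)
    (N : ℕ → ℕ → Ω → Fin d → ℝ) (hN : M.IsStrategy N) :
    ∃ Ntil : ℕ → ℕ → Ω → Fin d → ℝ, M.IsStrategy Ntil ∧ M.RealizesLosses Ntil ∧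
      ∀ x : ℝ, ∀ᵐ ω ∂M.P, M.V α x N ω ≤ M.V α x Ntil ω := by
  obtain ⟨hmeas, hpos, hmono, hliq, hzero⟩ := hN
  refine ⟨fun k t ω => NtilDef M N k t ω, ⟨?_, ?_, ?_, ?_, ?_⟩, ?_, ?_⟩
  · -- adapted
    intro k t
    have hpi := @measurable_pi_iff Ω (Fin d) (fun _ => ℝ) (M.F t) _
      (fun ω => NtilDef M N k t ω)
    refine hpi.mpr fun j => ?_
    refine Finset.measurable_sum _ fun i hi => ?_
    refine Measurable.ite ?_ ((measurable_pi_apply j).comp (hmeas i t)) measurable_const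
    exact (mfun_measurable M j i t) (measurableSet_singleton k)
  · -- nonneg
    intro k t ω j
    refine Finset.sum_nonneg fun i _ => ?_
    split_ifs
    · exact hpos i t ω j
    · exact le_rfl
  · -- nonincreasing
    intro k t hkt htT ω j
    show NtilDef M N k (t + 1) ω j ≤ NtilDef M N k t ω j
    unfold NtilDef
    rw [Finset.sum_range_succ]
    have hlast : (if mfun (fun u => M.S u ω j) (t + 1) (t + 1) = k
        then N (t + 1) (t + 1) ω j else 0) = 0 := by
      rw [if_neg]
      rw [mfun_of_le _ le_rfl]
      omega
    rw [hlast, add_zero]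
    refine Finset.sum_le_sum fun i hi => ?_
    simp only [Finset.mem_range] at hi
    by_cases h : mfun (fun u => M.S u ω j) i (t + 1) = k
    · rw [if_pos h, if_pos (mfun_succ_eq_of_le _ h hkt)]
      exact hmono i t (by omega) htT ω j
    · rw [if_neg h]
      split_ifs
      · exact hpos i t ω j
      · exact le_rfl
  · -- liquidation at T
    intro k ω j
    refine Finset.sum_eq_zero fun i _ => ?_
    rw [hliq i ω j]
    split_ifs <;> rfl
  · -- zero before purchase
    intro k t htk ω j
    refine Finset.sum_eq_zero fun i hi => ?_
    simp only [Finset.mem_range] at hi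
    rw [if_neg]
    have h1 := mfun_le (fun u => M.S u ω j) i t
    have h2 : max i t = t := max_eq_right (by omega)
    omega
  · -- realizes losses
    intro k t j hkt htT
    refine Filter.Eventually.of_forall fun ω hlt => ?_
    refine Finset.sum_eq_zero fun i _ => ?_
    by_cases h : mfun (fun u => M.S u ω j) i t = k
    · exact absurd hlt (mfun_not_lt _ h hkt)
    · rw [if_neg h]
  · -- domination
    intro x
    refine Filter.Eventually.of_forall fun ω => ?_
    have key := (etaP_le α x hα0 hα1.le (fun u => M.S u ω) (fun u => M.r u ω)
      (fun u => M.r_nonneg u ω) (fun i u => N i u ω) (fun i u => NtilDef M N i u ω)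
      (fun u j => Ntil_agg M N ω u j) (fun u => Ntil_UPx M N hpos ω u) T).1 T le_rfl
    unfold DPx at key
    show etaP α x (fun u => M.S u ω) (fun u => M.r u ω) (fun i u => N i u ω) T
      ≤ etaP α x (fun u => M.S u ω) (fun u => M.r u ω) (fun i u => NtilDef M N i u ω) T
    linarith

end
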